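/- For d ≥ 1, the super-operator Ψ₀ from d×d matrices to (d+1)×(d+1) matrices defined by letting Ψ₀[X] have (Tr(X)·I_d + Xᵀ)/(d+1) as its top-left d×d block and zeros elsewhere (where Xᵀ is the transpose of X) is a channel, i.e. it is completely positive and trace-preserving. -/

import Mathlib

open scoped Kronecker ComplexOrder Matrix

namespace ChannelDiscrimination

/-- The trace norm `Tr √(Aᴴ A)` of a complex square matrix. -/
noncomputable def traceNorm {ι : Type*} [Fintype ι] [DecidableEq ι]
    (A : Matrix ι ι ℂ) : ℝ :=
  (((Matrix.posSemidef_conjTranspose_mul_self A).1.eigenvectorUnitary : Matrix ι ι ℂ) *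
    Matrix.diagonal (((↑) : ℝ → ℂ) ∘ (√·) ∘ (Matrix.posSemidef_conjTranspose_mul_self A).1.eigenvalues) *
    (star (Matrix.posSemidef_conjTranspose_mul_self A).1.eigenvectorUnitary : Matrix ι ι ℂ)).trace.re

/-- A state: a positive semidefinite matrix of trace one. -/
def IsState {ι : Type*} [Fintype ι] (ρ : Matrix ι ι ℂ) : Prop :=
  ρ.PosSemidef ∧ ρ.trace = 1

/-- Separability of a bipartite matrix on `ℂ^m ⊗ ℂ^n`. -/
def IsSeparable {m n : ℕ} (σ : Matrix (Fin m × Fin n) (Fin m × Fin n) ℂ) : Prop :=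
  ∃ (N : ℕ) (p : Fin N → ℝ) (ρ : Fin N → Matrix (Fin m) (Fin m) ℂ)
    (τ : Fin N → Matrix (Fin n) (Fin n) ℂ),
    (∀ i, 0 ≤ p i) ∧ (∑ i, p i = 1) ∧ (∀ i, IsState (ρ i)) ∧ (∀ i, IsState (τ i)) ∧
    σ = ∑ i, (p i : ℂ) • (ρ i ⊗ₖ τ i)

/-- `Φ ⊗ id_n` for a super-operator `Φ` from `m×m` to `k×k` matrices. -/
def tensorId {m k : ℕ} (n : ℕ)
    (Φ : Matrix (Fin m) (Fin m) ℂ →ₗ[ℂ] Matrix (Fin k) (Fin k) ℂ) :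
    Matrix (Fin m × Fin n) (Fin m × Fin n) ℂ →ₗ[ℂ]
      Matrix (Fin k × Fin n) (Fin k × Fin n) ℂ where
  toFun M := Matrix.of fun p q => Φ (Matrix.of fun i j => M (i, p.2) (j, q.2)) p.1 q.1
  map_add' M N := by
    ext p q
    show Φ ((Matrix.of fun i j => M (i, p.2) (j, q.2)) +
        (Matrix.of fun i j => N (i, p.2) (j, q.2))) p.1 q.1 = _
    rw [map_add]
    rfl
  map_smul' c M := by
    ext p q
    show Φ (c • (Matrix.of fun i j => M (i, p.2) (j, q.2))) p.1 q.1 = _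
    rw [map_smul]
    rfl

/-- A positive super-operator. -/
def IsPositiveMap {m k : ℕ}
    (Φ : Matrix (Fin m) (Fin m) ℂ →ₗ[ℂ] Matrix (Fin k) (Fin k) ℂ) : Prop :=
  ∀ X : Matrix (Fin m) (Fin m) ℂ, X.PosSemidef → (Φ X).PosSemidef

/-- A trace-preserving super-operator. -/
def IsTracePreserving {m k : ℕ}
    (Φ : Matrix (Fin m) (Fin m) ℂ →ₗ[ℂ] Matrix (Fin k) (Fin k) ℂ) : Prop :=
  ∀ X : Matrix (Fin m) (Fin m) ℂ, (Φ X).trace = X.trace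

/-- A completely positive super-operator: `Φ ⊗ id_n` is positive for every `n`. -/
def IsCompletelyPositive {m k : ℕ}
    (Φ : Matrix (Fin m) (Fin m) ℂ →ₗ[ℂ] Matrix (Fin k) (Fin k) ℂ) : Prop :=
  ∀ (n : ℕ) (M : Matrix (Fin m × Fin n) (Fin m × Fin n) ℂ),
    M.PosSemidef → (tensorId n Φ M).PosSemidef

/-- A (quantum) channel: completely positive and trace-preserving. -/
def IsChannel {m k : ℕ}
    (Φ : Matrix (Fin m) (Fin m) ℂ →ₗ[ℂ] Matrix (Fin k) (Fin k) ℂ) : Prop :=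
  IsCompletelyPositive Φ ∧ IsTracePreserving Φ

/-- An entanglement-breaking channel. -/
def IsEntanglementBreaking {m k : ℕ}
    (Φ : Matrix (Fin m) (Fin m) ℂ →ₗ[ℂ] Matrix (Fin k) (Fin k) ℂ) : Prop :=
  IsChannel Φ ∧ ∀ (n : ℕ) (ρ : Matrix (Fin m × Fin n) (Fin m × Fin n) ℂ),
    IsState ρ → IsSeparable (tensorId n Φ ρ)

/-- `pad1 M c` is the `(k+1)×(k+1)` matrix with `M` as its top-left `k×k` block,
`c` in the bottom-right corner, and zeros elsewhere. -/
def pad1 {k : ℕ} (M : Matrix (Fin k) (Fin k) ℂ) (c : ℂ) :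
    Matrix (Fin (k + 1)) (Fin (k + 1)) ℂ :=
  Matrix.of fun a b =>
    Fin.lastCases (Fin.lastCases c (fun _ => 0) b)
      (fun i => Fin.lastCases 0 (fun j => M i j) b) a

/-- Partial transpose on the first tensor factor. -/
def ptransposeFst {d n : ℕ} (ρ : Matrix (Fin d × Fin n) (Fin d × Fin n) ℂ) :
    Matrix (Fin d × Fin n) (Fin d × Fin n) ℂ :=
  Matrix.of fun p q => ρ (q.1, p.2) (p.1, q.2)


section Aux

lemma psd_smul {n : Type*} [Fintype n] {M : Matrix n n ℂ} (hM : M.PosSemidef) {c : ℝ}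
    (hc : 0 ≤ c) : ((c:ℂ) • M).PosSemidef := by
  constructor
  · unfold Matrix.IsHermitian
    rw [Matrix.conjTranspose_smul, hM.1.eq]
    simp
  · exact (hM.smul (a := (c:ℂ)) (Complex.zero_le_real.mpr hc)).2

lemma psd_sum {n : Type*} [Fintype n] {ι : Type*} (s : Finset ι)
    (f : ι → Matrix n n ℂ) (hf : ∀ i ∈ s, (f i).PosSemidef) :
    (∑ i ∈ s, f i).PosSemidef := by
  classical
  induction s using Finset.induction_on with
  | empty => simpa using Matrix.PosSemidef.zero
  | insert a s hnotmem ih =>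
    rw [Finset.sum_insert hnotmem]
    have h1 := hf a (Finset.mem_insert_self a s)
    have h2 := ih fun i hi => hf i (Finset.mem_insert_of_mem hi)
    exact h1.add h2

variable {d n : ℕ}

/-- Embedded `E_{ij} + E_{ji}` as a `(d+1) × d` matrix. -/
def Ek (i j : Fin d) : Matrix (Fin (d+1)) (Fin d) ℂ :=
  Matrix.of fun a r =>
    (if a = i.castSucc ∧ r = j then 1 else 0) + (if a = j.castSucc ∧ r = i then 1 else 0)

/-- `Ek i j ⊗ I_n`. -/
def Lk (n : ℕ) (i j : Fin d) : Matrix (Fin (d+1) × Fin n) (Fin d × Fin n) ℂ :=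
  Matrix.of fun ap rs => Ek i j ap.1 rs.1 * (if ap.2 = rs.2 then 1 else 0)

lemma Ek_real (i j : Fin d) (a : Fin (d+1)) (r : Fin d) :
    star (Ek i j a r) = Ek i j a r := by
  unfold Ek
  simp only [Matrix.of_apply]
  split <;> split <;> simp

lemma Lk_entry (i j : Fin d) (M : Matrix (Fin d × Fin n) (Fin d × Fin n) ℂ)
    (a b : Fin (d+1)) (p q : Fin n) :
    (Lk n i j * M * (Lk n i j)ᴴ) (a, p) (b, q)
      = ∑ r : Fin d, ∑ r' : Fin d, Ek i j a r * Ek i j b r' * M (r, p) (r', q) := by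
  simp only [Matrix.mul_apply, Matrix.conjTranspose_apply, Lk, Matrix.of_apply]
  rw [Fintype.sum_prod_type]
  simp only [star_mul', apply_ite (star : ℂ → ℂ), star_one, star_zero, Ek_real,
    Fintype.sum_prod_type, mul_ite, ite_mul, mul_zero, zero_mul, mul_one, one_mul,
    Finset.sum_ite_eq, Finset.sum_ite_eq', Finset.mem_univ, if_true]
  rw [Finset.sum_comm]
  refine Finset.sum_congr rfl fun r _ => ?_
  rw [Finset.sum_mul]
  refine Finset.sum_congr rfl fun r' _ => ?_
  ring

theorem Psi0_kraus
    {d : ℕ}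
    (Ψ₀ : Matrix (Fin d) (Fin d) ℂ →ₗ[ℂ] Matrix (Fin (d + 1)) (Fin (d + 1)) ℂ)
    (hΨ₀ : ∀ X : Matrix (Fin d) (Fin d) ℂ,
      Ψ₀ X = pad1 (((d : ℂ) + 1)⁻¹ • (X.trace • (1 : Matrix (Fin d) (Fin d) ℂ) + Xᵀ)) 0)
    (n : ℕ) (M : Matrix (Fin d × Fin n) (Fin d × Fin n) ℂ) :
    tensorId n Ψ₀ M =
      (((2 * ((d:ℝ) + 1))⁻¹ : ℝ) : ℂ) •
        ∑ ij : Fin d × Fin d, Lk n ij.1 ij.2 * M * (Lk n ij.1 ij.2)ᴴ := by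
  have hd1 : ((d:ℂ) + 1) ≠ 0 := Nat.cast_add_one_ne_zero d
  ext ⟨a, p⟩ ⟨b, q⟩
  show Ψ₀ (Matrix.of fun i j => M (i, p) (j, q)) a b = _
  rw [hΨ₀]
  simp only [Matrix.smul_apply, Fintype.sum_prod_type, Matrix.sum_apply, Lk_entry]
  set X : Matrix (Fin d) (Fin d) ℂ := Matrix.of fun i j => M (i, p) (j, q) with hX
  induction a using Fin.lastCases with
  | last =>
    have hne : ∀ i : Fin d, Fin.last d ≠ i.castSucc := fun i h => (Fin.castSucc_lt_last i).ne' h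
    induction b using Fin.lastCases with
    | last => simp [pad1, Ek, hne]
    | cast b0 => simp [pad1, Ek, hne]
  | cast a0 =>
    induction b using Fin.lastCases with
    | last =>
      have hne : ∀ i : Fin d, Fin.last d ≠ i.castSucc := fun i h => (Fin.castSucc_lt_last i).ne' h
      simp [pad1, Ek, hne]
    | cast b0 =>
      simp only [pad1, Matrix.of_apply, Fin.lastCases_castSucc, Matrix.smul_apply,
        Matrix.add_apply, Matrix.transpose_apply, Ek, Fin.castSucc_inj,
        Matrix.smul_apply, Matrix.one_apply, smul_eq_mul]
      simp only [add_mul, mul_add, Finset.sum_add_distrib, mul_ite, ite_mul, mul_zero, zero_mul,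
        mul_one, one_mul, ite_and, Finset.sum_ite_eq, Finset.sum_ite_eq', Finset.mem_univ, if_true,
        Finset.sum_ite_irrel, Finset.sum_const_zero]
      have h2 : (2:ℂ) * d + 2 ≠ 0 := by
        intro h
        apply hd1
        have : (2:ℂ) * ((d:ℂ) + 1) = 0 := by ring_nf; ring_nf at h; exact h
        simpa using this
      simp only [Matrix.trace, Matrix.diag_apply, Matrix.of_apply, hX]
      push_cast
      rcases eq_or_ne a0 b0 with h | h <;> simp only [h, if_true, if_false] <;>
        field_simp <;> ring

end Aux

/-- For `d ≥ 1`, the super-operator `Ψ₀[X] = pad1 ((Tr(X)·I_d + Xᵀ)/(d+1)) 0`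
is a channel. -/
theorem Psi0_is_channel
    {d : ℕ} (hd : 1 ≤ d)
    (Ψ₀ : Matrix (Fin d) (Fin d) ℂ →ₗ[ℂ] Matrix (Fin (d + 1)) (Fin (d + 1)) ℂ)
    (hΨ₀ : ∀ X : Matrix (Fin d) (Fin d) ℂ,
      Ψ₀ X = pad1 (((d : ℂ) + 1)⁻¹ • (X.trace • (1 : Matrix (Fin d) (Fin d) ℂ) + Xᵀ)) 0) :
    IsChannel Ψ₀ := by
  constructor
  · intro n M hM
    rw [Psi0_kraus Ψ₀ hΨ₀ n M]
    exact psd_smul (psd_sum _ _ fun ij _ => hM.mul_mul_conjTranspose_same _) (by positivity)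
  · intro X
    rw [hΨ₀]
    unfold Matrix.trace pad1
    rw [Fin.sum_univ_castSucc]
    simp only [Matrix.diag_apply, Matrix.of_apply, Fin.lastCases_castSucc, Fin.lastCases_last,
      Matrix.smul_apply, Matrix.add_apply, Matrix.transpose_apply, Matrix.one_apply_eq,
      smul_eq_mul, add_zero]
    rw [← Finset.mul_sum, Finset.sum_add_distrib, Finset.sum_const, Finset.card_univ,
      Fintype.card_fin, nsmul_eq_mul]
    have hX : ∑ i : Fin d, X i i = X.trace := rfl
    rw [hX]
    have hd1 : ((d:ℂ) + 1) ≠ 0 := Nat.cast_add_one_ne_zero d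
    field_simp

end ChannelDiscrimination
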